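/- Let h : (0,∞) → ℝ be a measurable function supported in (0,1] such that there is a constant C with |h(μ)| ≤ C/(ln μ)² for all μ ∈ (0,1). Then there is a constant C′ such that for all t ≥ e, | t ∫₀¹ e^{−tμ²} h(μ) · 2μ dμ | ≤ C′/(ln t)². -/

import Mathlib

private lemma exp_lb (x : ℝ) (hx : 0 ≤ x) : x ^ 5 / 3125 ≤ Real.exp x := by
  have h1 : x / 5 ≤ Real.exp (x / 5) := by
    have := Real.add_one_le_exp (x / 5); linarith
  have h2 : (x / 5) ^ 5 ≤ Real.exp (x / 5) ^ 5 :=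
    pow_le_pow_left₀ (by positivity) h1 5
  have h3 : Real.exp (x / 5) ^ 5 = Real.exp x := by
    rw [← Real.exp_nat_mul]
    congr 1
    push_cast; ring
  calc x ^ 5 / 3125 = (x / 5) ^ 5 := by ring
    _ ≤ Real.exp (x / 5) ^ 5 := h2
    _ = Real.exp x := h3

/-- Key inequality: `t (log t)^2 ≤ 12500 e^{√t}` for `t ≥ e`. -/
private lemma key_ineq (t : ℝ) (ht : Real.exp 1 ≤ t) :
    t * Real.log t ^ 2 ≤ 12500 * Real.exp (Real.sqrt t) := by
  have ht1 : (1 : ℝ) ≤ t := le_trans (by have := Real.add_one_le_exp (1:ℝ); linarith) ht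
  have htpos : (0 : ℝ) < t := lt_of_lt_of_le one_pos ht1
  set x := Real.sqrt t with hx
  have hx1 : (1 : ℝ) ≤ x := by
    rw [hx, show (1:ℝ) = Real.sqrt 1 by simp]
    exact Real.sqrt_le_sqrt ht1
  have hxpos : (0 : ℝ) < x := lt_of_lt_of_le one_pos hx1
  have hts : t = x ^ 2 := by rw [hx, Real.sq_sqrt htpos.le]
  have hlog : Real.log t = 2 * Real.log x := by
    rw [hts, Real.log_pow]; push_cast; ring
  have hlx : Real.log x ≤ x := (Real.log_le_sub_one_of_pos hxpos).trans (by linarith)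
  have hlx0 : 0 ≤ Real.log x := Real.log_nonneg hx1
  have h1 : t * Real.log t ^ 2 ≤ 4 * x ^ 4 := by
    rw [hlog, hts]
    have : Real.log x ^ 2 ≤ x ^ 2 := pow_le_pow_left₀ hlx0 hlx 2
    nlinarith
  have h2 : x ^ 5 / 3125 ≤ Real.exp x := exp_lb x hxpos.le
  nlinarith [pow_le_pow_right₀ hx1 (show 4 ≤ 5 by norm_num)]

set_option maxHeartbeats 1600000 in
/-- Laplace-transform estimate: if `h` is measurable, supported in `(0,1]`, and
`|h(μ)| ≤ C/(ln μ)²` on `(0,1)`, then `|t ∫₀¹ e^{−tμ²} h(μ) 2μ dμ| ≤ C′/(ln t)²`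
for all `t ≥ e`. -/
theorem stmt4 (h : ℝ → ℝ) (hmeas : Measurable h)
    (hsupp : ∀ μ : ℝ, μ ∉ Set.Ioc (0 : ℝ) 1 → h μ = 0)
    (C : ℝ) (hbound : ∀ μ ∈ Set.Ioo (0 : ℝ) 1, |h μ| ≤ C / (Real.log μ) ^ 2) :
    ∃ C' : ℝ, ∀ t : ℝ, Real.exp 1 ≤ t →
      |t * ∫ μ in (0 : ℝ)..1, Real.exp (-t * μ ^ 2) * h μ * (2 * μ)| ≤
        C' / (Real.log t) ^ 2 := by
  have hC : 0 ≤ C := by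
    have := hbound (Real.exp (-1)) ⟨Real.exp_pos _, by
      calc Real.exp (-1) < Real.exp 0 := Real.exp_lt_exp.mpr (by norm_num)
        _ = 1 := Real.exp_zero⟩
    have hlog : Real.log (Real.exp (-1)) = -1 := Real.log_exp _
    rw [hlog] at this
    nlinarith [abs_nonneg (h (Real.exp (-1)))]
  set M : ℝ := ∫ μ in (0:ℝ)..1, |h μ| * (2 * μ) with hM
  have hM0 : 0 ≤ M := by
    apply intervalIntegral.integral_nonneg (by norm_num)
    intro u hu
    have : (0:ℝ) ≤ u := hu.1
    positivity
  refine ⟨16 * C + 12500 * M, fun t ht => ?_⟩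
  have ht1 : (1 : ℝ) < t :=
    lt_of_lt_of_le (by have := Real.add_one_le_exp (1:ℝ); linarith) ht
  have htpos : (0 : ℝ) < t := lt_trans one_pos ht1
  have hlogt : (1 : ℝ) ≤ Real.log t := by
    calc (1:ℝ) = Real.log (Real.exp 1) := (Real.log_exp 1).symm
      _ ≤ Real.log t := Real.log_le_log (Real.exp_pos 1) ht
  have hlogt2 : (0 : ℝ) < Real.log t ^ 2 := by positivity
  set f : ℝ → ℝ := fun μ => Real.exp (-t * μ ^ 2) * h μ * (2 * μ) with hf
  by_cases hint : IntervalIntegrable f MeasureTheory.volume 0 1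
  swap
  · rw [intervalIntegral.integral_undef hint, mul_zero, abs_zero]
    positivity
  -- the split point s = t^{-1/4}
  have hst1 : (1:ℝ) < Real.sqrt t := by
    rw [show (1:ℝ) = Real.sqrt 1 by simp]
    exact Real.sqrt_lt_sqrt (by norm_num) ht1
  have hsst1 : (1:ℝ) < Real.sqrt (Real.sqrt t) := by
    rw [show (1:ℝ) = Real.sqrt 1 by simp]
    exact Real.sqrt_lt_sqrt (by norm_num) hst1
  set s : ℝ := (Real.sqrt (Real.sqrt t))⁻¹ with hs
  have hs0 : 0 < s := by positivity
  have hs1 : s < 1 := by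
    rw [hs, inv_lt_one_iff₀]; right; exact hsst1
  have hssq : s ^ 2 = (Real.sqrt t)⁻¹ := by
    rw [hs, inv_pow, Real.sq_sqrt (Real.sqrt_nonneg t)]
  have hts2 : t * s ^ 2 = Real.sqrt t := by
    have hstpos : (0:ℝ) < Real.sqrt t := lt_trans one_pos hst1
    rw [hssq]
    field_simp
    exact (Real.sq_sqrt htpos.le).symm
  have hlogs : Real.log s = -(Real.log t / 4) := by
    rw [hs, Real.log_inv, Real.log_sqrt (Real.sqrt_nonneg t), Real.log_sqrt htpos.le]
    ring
  have hlogs2 : Real.log s ^ 2 = Real.log t ^ 2 / 16 := by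
    rw [hlogs]; ring
  have hlogs2pos : 0 < Real.log s ^ 2 := by rw [hlogs2]; positivity
  -- integrability facts
  have hsubint1 : IntervalIntegrable f MeasureTheory.volume 0 s :=
    hint.mono_set' (by
      rw [Set.uIoc_of_le hs0.le, Set.uIoc_of_le (by norm_num : (0:ℝ) ≤ 1)]
      exact Set.Ioc_subset_Ioc le_rfl hs1.le)
  have hsubint2 : IntervalIntegrable f MeasureTheory.volume s 1 :=
    hint.mono_set' (by
      rw [Set.uIoc_of_le hs1.le, Set.uIoc_of_le (by norm_num : (0:ℝ) ≤ 1)]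
      exact Set.Ioc_subset_Ioc hs0.le le_rfl)
  set g : ℝ → ℝ := fun μ => |h μ| * (2 * μ) with hg
  have hgmeas : Measurable g := (hmeas.abs).mul (measurable_const.mul measurable_id)
  have hgint : IntervalIntegrable g MeasureTheory.volume 0 1 := by
    apply ((hint.abs).const_mul (Real.exp t)).mono_fun
      (hgmeas.aestronglyMeasurable.restrict)
    rw [Set.uIoc_of_le (by norm_num : (0:ℝ) ≤ 1)]
    refine (MeasureTheory.ae_restrict_iff' measurableSet_Ioc).mpr (MeasureTheory.ae_of_all _ ?_)
    intro x hx
    show ‖g x‖ ≤ ‖Real.exp t * |f x|‖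
    have hx0 : 0 < x := hx.1
    have hx1 : x ≤ 1 := hx.2
    have h1 : ‖g x‖ = |h x| * (2 * x) := by
      rw [hg, Real.norm_eq_abs, abs_mul, abs_of_nonneg (abs_nonneg _),
        abs_of_nonneg (by linarith : (0:ℝ) ≤ 2 * x)]
    have h2 : ‖Real.exp t * |f x|‖ = Real.exp t * (Real.exp (-t * x ^ 2) * |h x| * (2 * x)) := by
      rw [Real.norm_eq_abs, abs_mul, abs_abs, Real.abs_exp, hf]
      simp only
      rw [abs_mul, abs_mul, Real.abs_exp, abs_of_nonneg (by linarith : (0:ℝ) ≤ 2 * x)]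
    rw [h1, h2]
    have hexp : (1:ℝ) ≤ Real.exp t * Real.exp (-t * x ^ 2) := by
      rw [← Real.exp_add]
      have : 0 ≤ t + -t * x ^ 2 := by
        have hx2 : x ^ 2 ≤ 1 := by nlinarith
        nlinarith [mul_le_mul_of_nonneg_left hx2 htpos.le]
      calc (1:ℝ) = Real.exp 0 := Real.exp_zero.symm
        _ ≤ _ := Real.exp_le_exp.mpr this
    nlinarith [abs_nonneg (h x), mul_nonneg (abs_nonneg (h x)) (by linarith : (0:ℝ) ≤ 2 * x)]
  have hgsubint1 : IntervalIntegrable g MeasureTheory.volume 0 s :=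
    hgint.mono_set' (by
      rw [Set.uIoc_of_le hs0.le, Set.uIoc_of_le (by norm_num : (0:ℝ) ≤ 1)]
      exact Set.Ioc_subset_Ioc le_rfl hs1.le)
  have hgsubint2 : IntervalIntegrable g MeasureTheory.volume s 1 :=
    hgint.mono_set' (by
      rw [Set.uIoc_of_le hs1.le, Set.uIoc_of_le (by norm_num : (0:ℝ) ≤ 1)]
      exact Set.Ioc_subset_Ioc hs0.le le_rfl)
  -- FTC computation : ∫₀ˢ e^{-tμ²} 2μ dμ = (1 - e^{-ts²})/t
  have hcont : Continuous (fun μ : ℝ => Real.exp (-t * μ ^ 2) * (2 * μ)) :=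
    (Real.continuous_exp.comp (continuous_const.mul (continuous_pow 2))).mul
      (continuous_const.mul continuous_id)
  have hFTC : ∫ μ in (0:ℝ)..s, Real.exp (-t * μ ^ 2) * (2 * μ)
      = (1 - Real.exp (-t * s ^ 2)) / t := by
    have hderiv : ∀ x ∈ Set.uIcc (0:ℝ) s, HasDerivAt (fun y : ℝ => -(Real.exp (-t * y ^ 2)) / t)
        (Real.exp (-t * x ^ 2) * (2 * x)) x := by
      intro x _
      have h1 : HasDerivAt (fun y : ℝ => -t * y ^ 2) (-t * (2 * x)) x := by
        have := (hasDerivAt_pow 2 x).const_mul (-t)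
        simpa [mul_comm, mul_assoc, mul_left_comm] using this
      have h2 : HasDerivAt (fun y : ℝ => Real.exp (-t * y ^ 2))
          (Real.exp (-t * x ^ 2) * (-t * (2 * x))) x := (Real.hasDerivAt_exp _).comp x h1
      have h3 := (h2.neg).div_const t
      refine h3.congr_deriv ?_
      rw [div_eq_iff htpos.ne']
      ring
    have := intervalIntegral.integral_eq_sub_of_hasDerivAt hderiv
      (hcont.intervalIntegrable 0 s)
    rw [this]
    simp [mul_zero, Real.exp_zero]
    ring
  -- Estimate on [0, s]
  have hA : ∫ μ in (0:ℝ)..s, |f μ| ≤ (C / Real.log s ^ 2) * ((1 - Real.exp (-t * s ^ 2)) / t) := by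
    rw [← hFTC, ← intervalIntegral.integral_const_mul]
    apply intervalIntegral.integral_mono_on hs0.le hsubint1.abs
      ((hcont.intervalIntegrable 0 s).const_mul _)
    intro x hx
    rcases eq_or_lt_of_le hx.1 with heq | hx0
    · rw [hf]; simp [← heq]
    have hx1 : x < 1 := lt_of_le_of_lt hx.2 hs1
    have hb := hbound x ⟨hx0, hx1⟩
    have hbs : C / Real.log x ^ 2 ≤ C / Real.log s ^ 2 := by
      apply div_le_div_of_nonneg_left hC hlogs2pos
      have hlx : Real.log x ≤ Real.log s := Real.log_le_log hx0 hx.2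
      have hls0 : Real.log s < 0 := Real.log_neg hs0 hs1
      nlinarith [mul_nonneg (by linarith : (0:ℝ) ≤ Real.log s - Real.log x)
        (by linarith : (0:ℝ) ≤ -Real.log s - Real.log x)]
    have hfx : |f x| = Real.exp (-t * x ^ 2) * |h x| * (2 * x) := by
      rw [hf]; simp only
      rw [abs_mul, abs_mul, Real.abs_exp, abs_of_nonneg (by linarith : (0:ℝ) ≤ 2 * x)]
    rw [hfx]
    have hexp : 0 < Real.exp (-t * x ^ 2) := Real.exp_pos _
    calc Real.exp (-t * x ^ 2) * |h x| * (2 * x)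
        ≤ Real.exp (-t * x ^ 2) * (C / Real.log s ^ 2) * (2 * x) := by
          have := hb.trans hbs
          exact mul_le_mul_of_nonneg_right
            (mul_le_mul_of_nonneg_left this hexp.le) (by linarith)
      _ = C / Real.log s ^ 2 * (Real.exp (-t * x ^ 2) * (2 * x)) := by ring
  -- Estimate on [s, 1]
  have hB : ∫ μ in s..(1:ℝ), |f μ| ≤ Real.exp (-(Real.sqrt t)) * M := by
    have step1 : ∫ μ in s..(1:ℝ), |f μ| ≤ ∫ μ in s..(1:ℝ), Real.exp (-(Real.sqrt t)) * g μ := by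
      apply intervalIntegral.integral_mono_on hs1.le hsubint2.abs
        (hgsubint2.const_mul _)
      intro x hx
      have hx0 : 0 < x := lt_of_lt_of_le hs0 hx.1
      have hfx : |f x| = Real.exp (-t * x ^ 2) * (|h x| * (2 * x)) := by
        rw [hf]; simp only
        rw [abs_mul, abs_mul, Real.abs_exp, abs_of_nonneg (by linarith : (0:ℝ) ≤ 2 * x)]
        ring
      rw [hfx, hg]
      have hexp : Real.exp (-t * x ^ 2) ≤ Real.exp (-(Real.sqrt t)) := by
        apply Real.exp_le_exp.mpr
        rw [← hts2]
        have hsx : s ^ 2 ≤ x ^ 2 := by nlinarith [hx.1, hs0]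
        nlinarith [mul_le_mul_of_nonneg_left hsx htpos.le]
      have hgnn : 0 ≤ |h x| * (2 * x) := mul_nonneg (abs_nonneg _) (by linarith)
      exact mul_le_mul_of_nonneg_right hexp hgnn
    have step2 : ∫ μ in s..(1:ℝ), Real.exp (-(Real.sqrt t)) * g μ
        = Real.exp (-(Real.sqrt t)) * ∫ μ in s..(1:ℝ), g μ :=
      intervalIntegral.integral_const_mul _ _
    have step3 : ∫ μ in s..(1:ℝ), g μ ≤ M := by
      rw [hM, ← intervalIntegral.integral_add_adjacent_intervals hgsubint1 hgsubint2]
      have : 0 ≤ ∫ μ in (0:ℝ)..s, g μ := by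
        apply intervalIntegral.integral_nonneg hs0.le
        intro u hu
        exact mul_nonneg (abs_nonneg _) (by linarith [hu.1])
      linarith
    calc ∫ μ in s..(1:ℝ), |f μ| ≤ Real.exp (-(Real.sqrt t)) * ∫ μ in s..(1:ℝ), g μ := by
          rw [← step2]; exact step1
      _ ≤ Real.exp (-(Real.sqrt t)) * M := by
          exact mul_le_mul_of_nonneg_left step3 (Real.exp_pos _).le
  -- Combine
  have hsplit : ∫ μ in (0:ℝ)..1, f μ
      = (∫ μ in (0:ℝ)..s, f μ) + ∫ μ in s..(1:ℝ), f μ :=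
    (intervalIntegral.integral_add_adjacent_intervals hsubint1 hsubint2).symm
  have habs1 : |∫ μ in (0:ℝ)..s, f μ| ≤ ∫ μ in (0:ℝ)..s, |f μ| :=
    intervalIntegral.abs_integral_le_integral_abs hs0.le
  have habs2 : |∫ μ in s..(1:ℝ), f μ| ≤ ∫ μ in s..(1:ℝ), |f μ| :=
    intervalIntegral.abs_integral_le_integral_abs hs1.le
  have hmain : |t * ∫ μ in (0:ℝ)..1, f μ|
      ≤ t * ((C / Real.log s ^ 2) * ((1 - Real.exp (-t * s ^ 2)) / t))
        + t * (Real.exp (-(Real.sqrt t)) * M) := by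
    rw [abs_mul, abs_of_pos htpos, hsplit]
    calc t * |(∫ μ in (0:ℝ)..s, f μ) + ∫ μ in s..(1:ℝ), f μ|
        ≤ t * (|∫ μ in (0:ℝ)..s, f μ| + |∫ μ in s..(1:ℝ), f μ|) := by
          exact mul_le_mul_of_nonneg_left (abs_add_le _ _) htpos.le
      _ ≤ t * ((∫ μ in (0:ℝ)..s, |f μ|) + ∫ μ in s..(1:ℝ), |f μ|) := by
          apply mul_le_mul_of_nonneg_left _ htpos.le
          linarith
      _ ≤ _ := by
          have := add_le_add hA hB
          nlinarith
  -- final numeric bounds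
  have hterm1 : t * ((C / Real.log s ^ 2) * ((1 - Real.exp (-t * s ^ 2)) / t))
      ≤ 16 * C / Real.log t ^ 2 := by
    have hexp : 0 < Real.exp (-t * s ^ 2) := Real.exp_pos _
    have hexp1 : Real.exp (-t * s ^ 2) ≤ 1 := by
      rw [← Real.exp_zero]
      apply Real.exp_le_exp.mpr
      nlinarith [sq_nonneg s]
    have h1 : t * ((C / Real.log s ^ 2) * ((1 - Real.exp (-t * s ^ 2)) / t))
        = (C / Real.log s ^ 2) * (1 - Real.exp (-t * s ^ 2)) := by
      rw [mul_comm t ((C / Real.log s ^ 2) * ((1 - Real.exp (-t * s ^ 2)) / t)),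
        mul_assoc, div_mul_cancel₀ _ (ne_of_gt htpos)]
    rw [h1, hlogs2]
    have h2 : C / (Real.log t ^ 2 / 16) = 16 * C / Real.log t ^ 2 := by
      field_simp
    rw [h2]
    have h3 : 0 ≤ 16 * C / Real.log t ^ 2 := by positivity
    nlinarith
  have hterm2 : t * (Real.exp (-(Real.sqrt t)) * M) ≤ 12500 * M / Real.log t ^ 2 := by
    have hepos : 0 < Real.exp (Real.sqrt t) := Real.exp_pos _
    have h1 : t * Real.exp (-(Real.sqrt t)) ≤ 12500 / Real.log t ^ 2 := by
      rw [Real.exp_neg, le_div_iff₀ hlogt2]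
      have h2 : t * (Real.exp (Real.sqrt t))⁻¹ * Real.log t ^ 2
          = t * Real.log t ^ 2 / Real.exp (Real.sqrt t) := by ring
      rw [h2, div_le_iff₀ hepos]
      linarith [key_ineq t ht]
    calc t * (Real.exp (-(Real.sqrt t)) * M) = (t * Real.exp (-(Real.sqrt t))) * M := by ring
      _ ≤ (12500 / Real.log t ^ 2) * M := mul_le_mul_of_nonneg_right h1 hM0
      _ = 12500 * M / Real.log t ^ 2 := by ring
  calc |t * ∫ μ in (0:ℝ)..1, f μ|
      ≤ t * ((C / Real.log s ^ 2) * ((1 - Real.exp (-t * s ^ 2)) / t))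
        + t * (Real.exp (-(Real.sqrt t)) * M) := hmain
    _ ≤ 16 * C / Real.log t ^ 2 + 12500 * M / Real.log t ^ 2 := add_le_add hterm1 hterm2
    _ = (16 * C + 12500 * M) / Real.log t ^ 2 := by ring
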